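/- Fix k, and let ρ = ρ(I,J) ∈ ℤ^k be the vector associated to an (l_1,l_2)-admissible pair (I,J), with J_up = J ∩ [1, l_1]. Then for 1 ≤ α ≤ k−1: (P1) ρ_α − 2 ≤ ρ_{α+1} ≤ ρ_α + 1; (P2) if α+1 ∈ J_up then ρ_{α+1} ≥ ρ_α; (P3) if α+1 ∉ J_up then ρ_{α+1} ≤ ρ_α. -/

import Mathlib

private lemma card_val_lt (b m : ℕ) (hm : m ≤ b) :
    (Finset.univ.filter (fun j : Fin b => (j : ℕ) < m)).card = m := by
  rw [← Fintype.card_subtype]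
  have e : {j : Fin b // (j : ℕ) < m} ≃ Fin m :=
    { toFun := fun j => ⟨j.1, j.2⟩
      invFun := fun i => ⟨⟨i, lt_of_lt_of_le i.2 hm⟩, i.2⟩
      left_inv := fun j => by ext; rfl
      right_inv := fun i => by ext; rfl }
  rw [Fintype.card_congr e, Fintype.card_fin]

private lemma sum_ite_le_one {n : ℕ} (P : Fin n → Prop) [DecidablePred P]
    (h : ∀ i j, P i → P j → i = j) :
    ∑ i : Fin n, (if P i then (1 : ℤ) else 0) ≤ 1 := by
  classical
  have : ∑ i : Fin n, (if P i then (1 : ℤ) else 0)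
      = ((Finset.univ.filter P).card : ℤ) := by
    simp [Finset.sum_boole]
  rw [this]
  have : (Finset.univ.filter P).card ≤ 1 := by
    apply Finset.card_le_one.mpr
    intro i hi j hj
    simp only [Finset.mem_filter, Finset.mem_univ, true_and] at hi hj
    exact h i j hi hj
  exact_mod_cast this

/-- properties (P1)–(P3) of the vector `ρ = ρ(I,J)` attached to an
`(l₁,l₂)`-admissible pair `(I,J)`: writing
`ρ = Σ_{i=1}^p κ(v_i) − Σ_{i=1}^a κ(u_i) − Σ_{i=a+1}^p κ(v'_i)` and
`J_up = J ∩ [1,l₁]`, for `1 ≤ α ≤ k−1` one has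
(P1) `ρ_α − 2 ≤ ρ_{α+1} ≤ ρ_α + 1`;
(P2) if `α+1 ∈ J_up` then `ρ_{α+1} ≥ ρ_α`;
(P3) if `α+1 ∉ J_up` then `ρ_{α+1} ≤ ρ_α`. -/
theorem stmt19 (k l1 l2 a b : ℕ) (hl1 : l1 ≤ k) (hl2 : l2 ≤ k)
    (u : Fin a → ℕ) (v : Fin b → ℕ) (hu : StrictMono u) (hv : StrictMono v)
    (hur : ∀ i, u i ∈ Finset.Icc 1 k) (hvr : ∀ i, v i ∈ Finset.Icc 1 k)
    (p : ℕ) (hp : p = (Finset.univ.filter (fun i : Fin b => v i ≤ l1)).card)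
    (hap : a ≤ p) (hpb : p ≤ b) (hbl2 : b ≤ l2)
    (hadm : ∀ i : Fin a, v (Fin.castLE (hap.trans hpb) i) ≤ u i ∧
      u i < ((Finset.Icc (l1 + 1) k \ Finset.image v Finset.univ).sort (· ≤ ·)).getD
        (p - ((i : ℕ) + 1)) (k + 1))
    (rho : ℕ → ℤ)
    (hrho : ∀ α, rho α =
      (∑ i : Fin p, if v (Fin.castLE hpb i) ≤ α then (1 : ℤ) else 0)
      - (∑ i : Fin a, if u i ≤ α then (1 : ℤ) else 0)
      - (∑ i : Fin p, if a ≤ (i : ℕ) then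
          (if ((Finset.Icc (l1 + 1) k \ Finset.image v Finset.univ).sort (· ≤ ·)).getD
                (p - ((i : ℕ) + 1)) (k + 1) ≤ α then (1 : ℤ) else 0)
          else 0)) :
    ∀ α : ℕ, 1 ≤ α → α + 1 ≤ k →
      (rho α - 2 ≤ rho (α + 1) ∧ rho (α + 1) ≤ rho α + 1) ∧
      ((α + 1 ∈ Finset.image v Finset.univ ∧ α + 1 ≤ l1) → rho α ≤ rho (α + 1)) ∧
      (¬(α + 1 ∈ Finset.image v Finset.univ ∧ α + 1 ≤ l1) → rho (α + 1) ≤ rho α) := by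
  classical
  intro α hα hαk
  set L : List ℕ := ((Finset.Icc (l1 + 1) k \ Finset.image v Finset.univ).sort (· ≤ ·))
    with hLdef
  have hLnodup : L.Nodup := Finset.sort_nodup _ _
  have hLmem : ∀ x ∈ L, l1 + 1 ≤ x ∧ x ≤ k ∧ x ∉ Finset.image v Finset.univ := by
    intro x hx
    rw [hLdef, Finset.mem_sort, Finset.mem_sdiff, Finset.mem_Icc] at hx
    exact ⟨hx.1.1, hx.1.2, hx.2⟩
  -- indices below p are exactly those with v ≤ l1
  have hvp : ∀ j : Fin b, (j : ℕ) < p ↔ v j ≤ l1 := by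
    intro j
    constructor
    · intro hj
      by_contra hle
      push_neg at hle
      have hsub : (Finset.univ.filter (fun i : Fin b => v i ≤ l1)) ⊆
          Finset.univ.filter (fun i : Fin b => (i : ℕ) < (j : ℕ)) := by
        intro i hi
        simp only [Finset.mem_filter, Finset.mem_univ, true_and] at hi ⊢
        by_contra hij
        push_neg at hij
        have : v j ≤ v i := hv.monotone (by exact_mod_cast hij)
        omega
      have hcard := Finset.card_le_card hsub
      rw [← hp, card_val_lt b j (le_of_lt j.2)] at hcard
      omega
    · intro hj
      have hsub : Finset.univ.filter (fun i : Fin b => (i : ℕ) < (j : ℕ) + 1) ⊆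
          Finset.univ.filter (fun i : Fin b => v i ≤ l1) := by
        intro i hi
        simp only [Finset.mem_filter, Finset.mem_univ, true_and] at hi ⊢
        have : v i ≤ v j := hv.monotone (by omega)
        omega
      have hcard := Finset.card_le_card hsub
      rw [← hp, card_val_lt b ((j : ℕ) + 1) j.2] at hcard
      omega
  -- facts about the getD values
  have hgetD : ∀ m : ℕ, L.getD m (k + 1) = α + 1 →
      m < L.length ∧ (α + 1) ∈ L := by
    intro m hm
    by_cases hml : m < L.length
    · refine ⟨hml, ?_⟩
      rw [List.getD_eq_getElem _ _ hml] at hm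
      rw [← hm]; exact List.getElem_mem hml
    · rw [List.getD_eq_default _ _ (by omega)] at hm
      omega
  -- the key difference identity
  have e1 : (∑ i : Fin p, if v (Fin.castLE hpb i) ≤ α + 1 then (1 : ℤ) else 0)
      - (∑ i : Fin p, if v (Fin.castLE hpb i) ≤ α then (1 : ℤ) else 0)
      = ∑ i : Fin p, if v (Fin.castLE hpb i) = α + 1 then (1 : ℤ) else 0 := by
    rw [← Finset.sum_sub_distrib]
    exact Finset.sum_congr rfl fun i _ => by split_ifs <;> omega
  have e2 : (∑ i : Fin a, if u i ≤ α + 1 then (1 : ℤ) else 0)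
      - (∑ i : Fin a, if u i ≤ α then (1 : ℤ) else 0)
      = ∑ i : Fin a, if u i = α + 1 then (1 : ℤ) else 0 := by
    rw [← Finset.sum_sub_distrib]
    exact Finset.sum_congr rfl fun i _ => by split_ifs <;> omega
  have e3 : (∑ i : Fin p, if a ≤ (i : ℕ) then
        (if L.getD (p - ((i : ℕ) + 1)) (k + 1) ≤ α + 1 then (1 : ℤ) else 0) else 0)
      - (∑ i : Fin p, if a ≤ (i : ℕ) then
        (if L.getD (p - ((i : ℕ) + 1)) (k + 1) ≤ α then (1 : ℤ) else 0) else 0)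
      = ∑ i : Fin p, if a ≤ (i : ℕ) ∧ L.getD (p - ((i : ℕ) + 1)) (k + 1) = α + 1
          then (1 : ℤ) else 0 := by
    rw [← Finset.sum_sub_distrib]
    exact Finset.sum_congr rfl fun i _ => by split_ifs <;> omega
  set A : ℤ := ∑ i : Fin p, if v (Fin.castLE hpb i) = α + 1 then (1 : ℤ) else 0 with hA
  set B : ℤ := ∑ i : Fin a, if u i = α + 1 then (1 : ℤ) else 0 with hB
  set C : ℤ := ∑ i : Fin p, if a ≤ (i : ℕ) ∧ L.getD (p - ((i : ℕ) + 1)) (k + 1) = α + 1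
      then (1 : ℤ) else 0 with hC
  have key : rho (α + 1) - rho α = A - B - C := by
    rw [hrho (α + 1), hrho α]
    linarith [e1, e2, e3]
  -- bounds
  have hA0 : 0 ≤ A := Finset.sum_nonneg fun i _ => by split <;> norm_num
  have hB0 : 0 ≤ B := Finset.sum_nonneg fun i _ => by split <;> norm_num
  have hC0 : 0 ≤ C := Finset.sum_nonneg fun i _ => by split <;> norm_num
  have hA1 : A ≤ 1 := by
    apply sum_ite_le_one
    intro i j hi hj
    have h2 := congrArg Fin.val (hv.injective (hi.trans hj.symm))
    simp only [Fin.coe_castLE] at h2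
    exact Fin.ext h2
  have hB1 : B ≤ 1 := by
    apply sum_ite_le_one
    intro i j hi hj
    exact hu.injective (hi.trans hj.symm)
  have hC1 : C ≤ 1 := by
    apply sum_ite_le_one
    intro i j hi hj
    obtain ⟨hai, hgi⟩ := hi
    obtain ⟨haj, hgj⟩ := hj
    obtain ⟨hli, -⟩ := hgetD _ hgi
    obtain ⟨hlj, -⟩ := hgetD _ hgj
    rw [List.getD_eq_getElem _ _ hli] at hgi
    rw [List.getD_eq_getElem _ _ hlj] at hgj
    have := (hLnodup.getElem_inj_iff).mp (hgi.trans hgj.symm)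
    have hip := i.2
    have hjp := j.2
    exact Fin.ext (by omega)
  refine ⟨⟨by linarith, by linarith⟩, ?_, ?_⟩
  · -- P2
    rintro ⟨hmem, hle⟩
    obtain ⟨j, -, hj⟩ := Finset.mem_image.mp hmem
    have hjp : (j : ℕ) < p := (hvp j).mpr (by omega)
    have hAge : (1 : ℤ) ≤ A := by
      have h1 := Finset.single_le_sum
        (f := fun i : Fin p => if v (Fin.castLE hpb i) = α + 1 then (1 : ℤ) else 0)
        (fun i _ => by split <;> norm_num)
        (Finset.mem_univ (⟨(j : ℕ), hjp⟩ : Fin p))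
      rw [if_pos] at h1
      · exact h1
      · have he : Fin.castLE hpb (⟨(j : ℕ), hjp⟩ : Fin p) = j := Fin.ext rfl
        rw [he, hj]
    have hCz : C ≤ 0 := by
      apply Finset.sum_nonpos
      intro i _
      rw [if_neg]
      rintro ⟨-, hgi⟩
      obtain ⟨-, hmemL⟩ := hgetD _ hgi
      have := (hLmem _ hmemL).1
      omega
    linarith
  · -- P3
    intro hnot
    have hAz : A ≤ 0 := by
      apply Finset.sum_nonpos
      intro i _
      rw [if_neg]
      intro hvi
      have hile : v (Fin.castLE hpb i) ≤ l1 := (hvp _).mp i.2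
      exact hnot ⟨Finset.mem_image.mpr ⟨Fin.castLE hpb i, Finset.mem_univ _, hvi⟩, by omega⟩
    linarith
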